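/- arXiv:1105.2722 — 3 statements merged into one kernel-verified Lean document; each statement's English description precedes it below -/
import Mathlib

section
/- For every ε > 0 there is a constant C(ε) such that for all 0 < t ≤ 1, t^{1/2} |ln(t/e²)|^ε ∫₀^t (t-τ)^{-1/2} τ^{-1} |ln(τ/e²)|^{-1-ε} dτ ≤ C/ε. -/
open MeasureTheory Set Filter Topology

private lemma stmt7_hasDeriv (ε : ℝ) (hε : 0 < ε) {x : ℝ} (hx : 0 < x) (hx1 : x ≤ 1) :
    HasDerivAt (fun y => (2 - Real.log y) ^ (-ε) / ε)
      (x⁻¹ * (2 - Real.log x) ^ (-1 - ε)) x := by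
  have hpos : 0 < 2 - Real.log x := by
    have := Real.log_nonpos hx.le hx1
    linarith
  have hlog : HasDerivAt (fun y : ℝ => 2 - Real.log y) (-x⁻¹) x := by
    simpa using (Real.hasDerivAt_log hx.ne').const_sub 2
  have hd := (hlog.rpow_const (p := -ε) (Or.inl hpos.ne')).div_const ε
  refine hd.congr_deriv ?_
  rw [show (-1 : ℝ) - ε = -ε - 1 by ring]
  field_simp

private lemma stmt7_contOn (ε : ℝ) {s : Set ℝ} (hs : ∀ x ∈ s, 0 < x ∧ x ≤ 1) :
    ContinuousOn (fun x : ℝ => x⁻¹ * (2 - Real.log x) ^ (-1 - ε)) s := by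
  intro x hx
  obtain ⟨hx0, hx1⟩ := hs x hx
  have hpos : 0 < 2 - Real.log x := by
    have := Real.log_nonpos hx0.le hx1; linarith
  have h1 : ContinuousAt (fun y : ℝ => 2 - Real.log y) x :=
    continuousAt_const.sub (Real.continuousAt_log hx0.ne')
  exact ((continuousAt_inv₀ hx0.ne').mul
    (h1.rpow_const (Or.inl hpos.ne'))).continuousWithinAt

private lemma stmt7_key (ε : ℝ) (hε : 0 < ε) {c : ℝ} (hc : 0 < c) (hc1 : c ≤ 1) :
    IntegrableOn (fun τ : ℝ => τ⁻¹ * (2 - Real.log τ) ^ (-1 - ε)) (Ioc 0 c) ∧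
      (∫ τ in Ioc (0:ℝ) c, τ⁻¹ * (2 - Real.log τ) ^ (-1 - ε))
        ≤ (2 - Real.log c) ^ (-ε) / ε := by
  set g : ℝ → ℝ := fun τ => τ⁻¹ * (2 - Real.log τ) ^ (-1 - ε) with hg
  have hii : ∀ δ : ℝ, 0 < δ → δ ≤ c → IntervalIntegrable g volume δ c := by
    intro δ hδ hδc
    apply ContinuousOn.intervalIntegrable
    apply stmt7_contOn
    intro x hx
    rw [uIcc_of_le hδc] at hx
    exact ⟨hδ.trans_le hx.1, hx.2.trans hc1⟩
  have hFTC : ∀ δ : ℝ, 0 < δ → δ ≤ c →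
      (∫ x in δ..c, g x) = (2 - Real.log c) ^ (-ε) / ε - (2 - Real.log δ) ^ (-ε) / ε := by
    intro δ hδ hδc
    apply intervalIntegral.integral_eq_sub_of_hasDerivAt
    · intro x hx
      rw [uIcc_of_le hδc] at hx
      exact stmt7_hasDeriv ε hε (hδ.trans_le hx.1) (hx.2.trans hc1)
    · exact hii δ hδ hδc
  have hnn : ∀ x : ℝ, 0 < x → x ≤ 1 → 0 ≤ g x := by
    intro x hx hx1
    have := Real.log_nonpos hx.le hx1
    exact mul_nonneg (inv_nonneg.2 hx.le) (Real.rpow_nonneg (by linarith) _)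
  have hHnn : ∀ δ : ℝ, 0 < δ → δ ≤ 1 → 0 ≤ (2 - Real.log δ) ^ (-ε) / ε := by
    intro δ hδ hδ1
    have := Real.log_nonpos hδ.le hδ1
    exact div_nonneg (Real.rpow_nonneg (by linarith) _) hε.le
  have hseq : ∀ n : ℕ, 0 < c / (n + 1) ∧ c / (n + 1) ≤ c := by
    intro n
    constructor
    · positivity
    · apply div_le_self hc.le
      simp
  have hbd : ∀ n : ℕ, (∫ x in Ioc (c / (n+1)) c, ‖g x‖) ≤ (2 - Real.log c) ^ (-ε) / ε := by
    intro n
    obtain ⟨h1, h2⟩ := hseq n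
    rw [← intervalIntegral.integral_of_le h2]
    have heq : (∫ x in (c/(n+1))..c, ‖g x‖) = ∫ x in (c/(n+1))..c, g x := by
      apply intervalIntegral.integral_congr
      intro x hx
      rw [uIcc_of_le h2] at hx
      exact Real.norm_of_nonneg (hnn x (h1.trans_le hx.1) (hx.2.trans hc1))
    rw [heq, hFTC _ h1 h2]
    have := hHnn _ h1 (h2.trans hc1)
    linarith
  have htend : Tendsto (fun n : ℕ => c / (n + 1)) atTop (𝓝 0) := by
    have := tendsto_one_div_add_atTop_nhds_zero_nat.const_mul c
    simpa [div_eq_mul_inv] using this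
  have hInt : IntegrableOn g (Ioc 0 c) := by
    exact integrableOn_Ioc_of_intervalIntegral_norm_bounded_left
      (fun n : ℕ => (intervalIntegrable_iff_integrableOn_Ioc_of_le (hseq n).2).mp
        (hii _ (hseq n).1 (hseq n).2))
      htend (Eventually.of_forall hbd)
  refine ⟨hInt, ?_⟩
  have hUnion : (⋃ n : ℕ, Ioc (c / (n + 1)) c) = Ioc 0 c := by
    ext x
    simp only [mem_iUnion, mem_Ioc]
    constructor
    · rintro ⟨n, h1, h2⟩
      exact ⟨(hseq n).1.trans h1, h2⟩
    · rintro ⟨hx0, hxc⟩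
      obtain ⟨n, hn⟩ := exists_nat_gt (c / x)
      refine ⟨n, ?_, hxc⟩
      rw [div_lt_iff₀ hx0] at hn
      rw [div_lt_iff₀ (by positivity)]
      nlinarith
  have hmono : Monotone fun n : ℕ => Ioc (c / (n + 1)) c := by
    intro n m hnm
    apply Ioc_subset_Ioc_left
    apply div_le_div_of_nonneg_left hc.le (by positivity)
    have : (n : ℝ) ≤ m := Nat.cast_le.2 hnm
    linarith
  have htm := tendsto_setIntegral_of_monotone (μ := volume) (f := g)
    (fun n : ℕ => measurableSet_Ioc) hmono (hUnion.symm ▸ hInt)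
  rw [hUnion] at htm
  refine le_of_tendsto htm (Eventually.of_forall fun n => ?_)
  rw [← intervalIntegral.integral_of_le (hseq n).2, hFTC _ (hseq n).1 (hseq n).2]
  have := hHnn _ (hseq n).1 ((hseq n).2.trans hc1)
  linarith

/-- Singular integral estimate with logarithmic weights used in the fixed point
argument for the Boussinesq system: for every `ε > 0` there is `C(ε)` such that
for all `0 < t ≤ 1`,
`t^{1/2} |ln(t/e²)|^ε ∫₀^t (t-τ)^{-1/2} τ^{-1} |ln(τ/e²)|^{-1-ε} dτ ≤ C/ε`. -/
theorem stmt7 (ε : ℝ) (hε : 0 < ε) :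
    ∃ C : ℝ, 0 < C ∧ ∀ t : ℝ, 0 < t → t ≤ 1 →
      t ^ ((1 : ℝ) / 2) * |Real.log (t / Real.exp 2)| ^ ε *
        (∫ τ in (0 : ℝ)..t,
          (t - τ) ^ (-(1 : ℝ) / 2) * τ⁻¹ *
            |Real.log (τ / Real.exp 2)| ^ (-1 - ε)) ≤ C / ε := by
  refine ⟨2 + 2 * ε, by positivity, fun t ht ht1 => ?_⟩
  have hlt : Real.log t ≤ 0 := Real.log_nonpos ht.le ht1
  have hA0 : (0:ℝ) < 2 - Real.log t := by linarith
  have hA2 : (2:ℝ) ≤ 2 - Real.log t := by linarith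
  have habs : ∀ s : ℝ, 0 < s → s ≤ 1 → |Real.log (s / Real.exp 2)| = 2 - Real.log s := by
    intro s hs hs1
    rw [Real.log_div hs.ne' (Real.exp_ne_zero 2), Real.log_exp,
      abs_of_nonpos (by linarith [Real.log_nonpos hs.le hs1])]
    ring
  rw [habs t ht ht1, intervalIntegral.integral_of_le ht.le]
  set A := 2 - Real.log t with hAdef
  have hcg : (∫ τ in Ioc (0:ℝ) t,
        (t - τ) ^ (-(1 : ℝ) / 2) * τ⁻¹ * |Real.log (τ / Real.exp 2)| ^ (-1 - ε))
      = ∫ τ in Ioc (0:ℝ) t,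
        (t - τ) ^ (-(1 : ℝ) / 2) * (τ⁻¹ * (2 - Real.log τ) ^ (-1 - ε)) := by
    apply setIntegral_congr_fun measurableSet_Ioc
    intro τ hτ
    simp only
    rw [habs τ hτ.1 (hτ.2.trans ht1)]
    ring
  rw [hcg]
  obtain ⟨hInt, hbound⟩ := stmt7_key ε hε ht ht1
  -- the (t - τ)^(-1/2) integral
  have h2ii : IntervalIntegrable (fun τ : ℝ => (t - τ) ^ (-(1:ℝ)/2)) volume 0 t := by
    have h := (intervalIntegral.intervalIntegrable_rpow' (a := 0) (b := t)
      (r := -(1:ℝ)/2) (by norm_num)).comp_sub_left t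
    simpa using h.symm
  have h2int : IntegrableOn (fun τ : ℝ => (t - τ) ^ (-(1:ℝ)/2)) (Ioc 0 t) :=
    (intervalIntegrable_iff_integrableOn_Ioc_of_le ht.le).mp h2ii
  have h2val : (∫ τ in Ioc (0:ℝ) t, (t - τ) ^ (-(1:ℝ)/2)) = 2 * t ^ ((1:ℝ)/2) := by
    rw [← intervalIntegral.integral_of_le ht.le,
      intervalIntegral.integral_comp_sub_left (fun x : ℝ => x ^ (-(1:ℝ)/2)) t,
      sub_self, sub_zero, integral_rpow (Or.inl (by norm_num)),
      show (-(1:ℝ)/2 + 1) = 1/2 by norm_num, Real.zero_rpow (by norm_num : (1:ℝ)/2 ≠ 0)]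
    ring
  -- pointwise majorant bound
  have hmaj : (∫ τ in Ioc (0:ℝ) t, (t - τ) ^ (-(1:ℝ)/2) * (τ⁻¹ * (2 - Real.log τ) ^ (-1 - ε)))
      ≤ (t/2) ^ (-(1:ℝ)/2) * (∫ τ in Ioc (0:ℝ) t, τ⁻¹ * (2 - Real.log τ) ^ (-1 - ε))
        + (2/t) * A ^ (-1 - ε) * (2 * t ^ ((1:ℝ)/2)) := by
    have hMint : Integrable (fun τ : ℝ =>
        (t/2) ^ (-(1:ℝ)/2) * (τ⁻¹ * (2 - Real.log τ) ^ (-1 - ε))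
          + (2/t) * A ^ (-1 - ε) * (t - τ) ^ (-(1:ℝ)/2)) (volume.restrict (Ioc 0 t)) :=
      (hInt.const_mul _).add (h2int.const_mul _)
    have hle := integral_mono_of_nonneg (μ := volume.restrict (Ioc 0 t))
      (f := fun τ : ℝ => (t - τ) ^ (-(1:ℝ)/2) * (τ⁻¹ * (2 - Real.log τ) ^ (-1 - ε)))
      (g := fun τ : ℝ => (t/2) ^ (-(1:ℝ)/2) * (τ⁻¹ * (2 - Real.log τ) ^ (-1 - ε))
          + (2/t) * A ^ (-1 - ε) * (t - τ) ^ (-(1:ℝ)/2)) ?_ hMint ?_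
    · calc (∫ τ in Ioc (0:ℝ) t, (t - τ) ^ (-(1:ℝ)/2) * (τ⁻¹ * (2 - Real.log τ) ^ (-1 - ε)))
          ≤ ∫ τ in Ioc (0:ℝ) t, ((t/2) ^ (-(1:ℝ)/2) * (τ⁻¹ * (2 - Real.log τ) ^ (-1 - ε))
              + (2/t) * A ^ (-1 - ε) * (t - τ) ^ (-(1:ℝ)/2)) := hle
        _ = (t/2) ^ (-(1:ℝ)/2) * (∫ τ in Ioc (0:ℝ) t, τ⁻¹ * (2 - Real.log τ) ^ (-1 - ε))
              + (2/t) * A ^ (-1 - ε) * (2 * t ^ ((1:ℝ)/2)) := by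
            rw [integral_add (hInt.const_mul _) (h2int.const_mul _),
              integral_const_mul, integral_const_mul, h2val]
    · filter_upwards [ae_restrict_mem measurableSet_Ioc] with τ hτ
      have hlogτ : Real.log τ ≤ 0 := Real.log_nonpos hτ.1.le (hτ.2.trans ht1)
      exact mul_nonneg (Real.rpow_nonneg (by linarith [hτ.2]) _)
        (mul_nonneg (inv_nonneg.2 hτ.1.le) (Real.rpow_nonneg (by linarith) _))
    · filter_upwards [ae_restrict_mem measurableSet_Ioc] with τ hτ
      obtain ⟨hτ0, hτt⟩ := hτ
      have hτ1 : τ ≤ 1 := hτt.trans ht1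
      have hlogτ : Real.log τ ≤ 0 := Real.log_nonpos hτ0.le hτ1
      have hLτ0 : (0:ℝ) ≤ 2 - Real.log τ := by linarith
      have ht2 : (0:ℝ) < t/2 := by linarith
      rcases le_or_gt τ (t/2) with hcase | hcase
      · have h1 : (t - τ) ^ (-(1:ℝ)/2) ≤ (t/2) ^ (-(1:ℝ)/2) :=
          Real.rpow_le_rpow_of_nonpos ht2 (by linarith) (by norm_num)
        have h2 : (t - τ) ^ (-(1:ℝ)/2) * (τ⁻¹ * (2 - Real.log τ) ^ (-1 - ε))
            ≤ (t/2) ^ (-(1:ℝ)/2) * (τ⁻¹ * (2 - Real.log τ) ^ (-1 - ε)) :=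
          mul_le_mul_of_nonneg_right h1
            (mul_nonneg (inv_nonneg.2 hτ0.le) (Real.rpow_nonneg hLτ0 _))
        have h3 : 0 ≤ (2/t) * A ^ (-1 - ε) * (t - τ) ^ (-(1:ℝ)/2) :=
          mul_nonneg (mul_nonneg (by positivity) (Real.rpow_nonneg hA0.le _))
            (Real.rpow_nonneg (by linarith) _)
        linarith
      · have h1 : τ⁻¹ ≤ 2/t := by
          rw [show (2:ℝ)/t = (t/2)⁻¹ by rw [inv_div]]
          exact inv_anti₀ ht2 hcase.le
        have h2 : (2 - Real.log τ) ^ (-1 - ε) ≤ A ^ (-1 - ε) := by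
          apply Real.rpow_le_rpow_of_nonpos hA0
          · have := Real.log_le_log hτ0 hτt
            rw [hAdef]; linarith
          · linarith
        have h3 : τ⁻¹ * (2 - Real.log τ) ^ (-1 - ε) ≤ (2/t) * A ^ (-1 - ε) :=
          mul_le_mul h1 h2 (Real.rpow_nonneg hLτ0 _) (by positivity)
        have h4 : (t - τ) ^ (-(1:ℝ)/2) * (τ⁻¹ * (2 - Real.log τ) ^ (-1 - ε))
            ≤ (t - τ) ^ (-(1:ℝ)/2) * ((2/t) * A ^ (-1 - ε)) :=
          mul_le_mul_of_nonneg_left h3 (Real.rpow_nonneg (by linarith) _)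
        have h5 : 0 ≤ (t/2) ^ (-(1:ℝ)/2) * (τ⁻¹ * (2 - Real.log τ) ^ (-1 - ε)) :=
          mul_nonneg (Real.rpow_nonneg ht2.le _)
            (mul_nonneg (inv_nonneg.2 hτ0.le) (Real.rpow_nonneg hLτ0 _))
        nlinarith [h4, h5]
  -- algebraic identities
  have hAA : A ^ ε * A ^ (-ε) = 1 := by
    rw [← Real.rpow_add hA0]; simp
  have hAA2 : A ^ ε * A ^ (-1 - ε) = A⁻¹ := by
    rw [← Real.rpow_add hA0, show ε + (-1 - ε) = -1 by ring, Real.rpow_neg_one]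
  have htt : t ^ ((1:ℝ)/2) * t ^ ((1:ℝ)/2) = t := by
    rw [← Real.rpow_add ht]; norm_num
  have ht2 : (0:ℝ) < t/2 := by linarith
  have hts : t ^ ((1:ℝ)/2) * (t/2) ^ (-(1:ℝ)/2) ≤ 2 := by
    have h1 : (t/2) ^ (-(1:ℝ)/2) = ((t/2) ^ ((1:ℝ)/2))⁻¹ := by
      rw [show (-(1:ℝ)/2) = -((1:ℝ)/2) by ring, Real.rpow_neg ht2.le]
    have h2 : (t/(t/2)) ^ ((1:ℝ)/2) = t ^ ((1:ℝ)/2) * ((t/2) ^ ((1:ℝ)/2))⁻¹ := by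
      rw [Real.div_rpow ht.le ht2.le, div_eq_mul_inv]
    have h3 : t/(t/2) = 2 := by field_simp
    calc t ^ ((1:ℝ)/2) * (t/2) ^ (-(1:ℝ)/2) = (2:ℝ) ^ ((1:ℝ)/2) := by
          rw [h1, ← h2, h3]
      _ ≤ 2 ^ (1:ℝ) := Real.rpow_le_rpow_of_exponent_le one_le_two (by norm_num)
      _ = 2 := Real.rpow_one 2
  have hts0 : 0 ≤ t ^ ((1:ℝ)/2) * A ^ ε :=
    mul_nonneg (Real.rpow_nonneg ht.le _) (Real.rpow_nonneg hA0.le _)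
  have hAinv : A⁻¹ ≤ 1/2 := by
    rw [show (1:ℝ)/2 = 2⁻¹ by norm_num]
    exact inv_anti₀ (by norm_num) hA2
  -- final chain
  have e1 : t ^ ((1:ℝ)/2) * A ^ ε * ((t/2) ^ (-(1:ℝ)/2) * (A ^ (-ε) / ε)) ≤ 2 / ε := by
    have heq : t ^ ((1:ℝ)/2) * A ^ ε * ((t/2) ^ (-(1:ℝ)/2) * (A ^ (-ε) / ε))
        = (t ^ ((1:ℝ)/2) * (t/2) ^ (-(1:ℝ)/2)) * (A ^ ε * A ^ (-ε)) / ε := by ring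
    rw [heq, hAA, mul_one]
    gcongr
  have e2 : t ^ ((1:ℝ)/2) * A ^ ε * ((2/t) * A ^ (-1 - ε) * (2 * t ^ ((1:ℝ)/2))) ≤ 2 := by
    have heq : t ^ ((1:ℝ)/2) * A ^ ε * ((2/t) * A ^ (-1 - ε) * (2 * t ^ ((1:ℝ)/2)))
        = 4 * ((t ^ ((1:ℝ)/2) * t ^ ((1:ℝ)/2)) / t) * (A ^ ε * A ^ (-1 - ε)) := by ring
    rw [heq, htt, hAA2, div_self ht.ne', mul_one]
    linarith
  calc t ^ ((1:ℝ)/2) * A ^ ε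
        * (∫ τ in Ioc (0:ℝ) t, (t - τ) ^ (-(1:ℝ)/2) * (τ⁻¹ * (2 - Real.log τ) ^ (-1 - ε)))
      ≤ t ^ ((1:ℝ)/2) * A ^ ε * ((t/2) ^ (-(1:ℝ)/2)
          * (∫ τ in Ioc (0:ℝ) t, τ⁻¹ * (2 - Real.log τ) ^ (-1 - ε))
          + (2/t) * A ^ (-1 - ε) * (2 * t ^ ((1:ℝ)/2))) :=
        mul_le_mul_of_nonneg_left hmaj hts0
    _ ≤ t ^ ((1:ℝ)/2) * A ^ ε * ((t/2) ^ (-(1:ℝ)/2) * (A ^ (-ε) / ε)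
          + (2/t) * A ^ (-1 - ε) * (2 * t ^ ((1:ℝ)/2))) := by
        apply mul_le_mul_of_nonneg_left _ hts0
        exact add_le_add
          (mul_le_mul_of_nonneg_left hbound (Real.rpow_nonneg ht2.le _)) le_rfl
    _ = t ^ ((1:ℝ)/2) * A ^ ε * ((t/2) ^ (-(1:ℝ)/2) * (A ^ (-ε) / ε))
          + t ^ ((1:ℝ)/2) * A ^ ε * ((2/t) * A ^ (-1 - ε) * (2 * t ^ ((1:ℝ)/2))) := by ring
    _ ≤ 2 / ε + 2 := add_le_add e1 e2
    _ = (2 + 2 * ε) / ε := by field_simp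
end

section
/- Let p ∈ (n/2, ∞) with n ≥ 2, and set ν(p) = (2p - n)/(2p) > 0. For every ε > 0 and every ν ∈ (0, ν(p)), there is a constant C such that for all 0 < t ≤ 1, t^{1/2}|ln(t/e²)| ∫₀^t (t-τ)^{-n/(2p)} τ^{-1/2} |ln(τ/e²)|^{-ε} dτ ≤ C t^ν. -/
open MeasureTheory Set intervalIntegral

-- value of the log factor for 0 < x ≤ 1
lemma logfac (x : ℝ) (hx : 0 < x) (hx1 : x ≤ 1) :
    |Real.log (x / Real.exp 2)| = 2 - Real.log x := by
  rw [Real.log_div (ne_of_gt hx) (Real.exp_ne_zero 2), Real.log_exp,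
    abs_of_nonpos (by linarith [Real.log_nonpos hx.le hx1])]
  ring

lemma logfac_le_one {x ε : ℝ} (hx : 0 < x) (hx1 : x ≤ 1) (hε : 0 < ε) :
    |Real.log (x / Real.exp 2)| ^ (-ε) ≤ 1 := by
  rw [logfac x hx hx1]
  exact Real.rpow_le_one_of_one_le_of_nonpos
    (by linarith [Real.log_nonpos hx.le hx1]) (by linarith)

lemma aux_meas {a t ε : ℝ} (ht : 0 < t) (ht1 : t ≤ 1) :
    AEStronglyMeasurable
      (fun τ : ℝ => (t - τ) ^ (-a) * τ ^ (-(1:ℝ)/2) * |Real.log (τ / Real.exp 2)| ^ (-ε))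
      (volume.restrict (Ioc (0:ℝ) t)) := by
  rw [← Measure.restrict_congr_set Ioo_ae_eq_Ioc]
  refine (ContinuousOn.mul (ContinuousOn.mul ?_ ?_) ?_).aestronglyMeasurable measurableSet_Ioo
  · intro x hx
    exact (((continuous_const.sub continuous_id).continuousAt).rpow_const
      (Or.inl (by exact sub_ne_zero.mpr (ne_of_gt hx.2)))).continuousWithinAt
  · intro x hx
    exact (continuousAt_id.rpow_const (Or.inl (ne_of_gt hx.1))).continuousWithinAt
  · intro x hx
    have hx0 : (0:ℝ) < x := hx.1
    have hxt : x < t := hx.2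
    have hne : x / Real.exp 2 ≠ 0 := by positivity
    have habs : |Real.log (x / Real.exp 2)| ≠ 0 := by
      rw [logfac x hx0 (by linarith)]
      have := Real.log_nonpos hx0.le (by linarith : x ≤ 1)
      linarith
    exact (((continuousAt_id.div_const _).log hne).abs.rpow_const (Or.inl habs)).continuousWithinAt

lemma gmeas {a t : ℝ} (ht : 0 < t) :
    AEStronglyMeasurable (fun τ : ℝ => (t - τ) ^ (-a) * τ ^ (-(1:ℝ)/2))
      (volume.restrict (Ioc (0:ℝ) t)) := by
  rw [← Measure.restrict_congr_set Ioo_ae_eq_Ioc]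
  refine (ContinuousOn.mul ?_ ?_).aestronglyMeasurable measurableSet_Ioo
  · intro x hx
    exact (((continuous_const.sub continuous_id).continuousAt).rpow_const
      (Or.inl (by exact sub_ne_zero.mpr (ne_of_gt hx.2)))).continuousWithinAt
  · intro x hx
    exact (continuousAt_id.rpow_const (Or.inl (ne_of_gt hx.1))).continuousWithinAt

-- integrability of g on the two pieces and the integral bound
lemma core_bound {a : ℝ} (ha0 : 0 < a) (ha1 : a < 1) {ε : ℝ} (hε : 0 < ε)
    {t : ℝ} (ht : 0 < t) (ht1 : t ≤ 1) :
    (∫ τ in (0:ℝ)..t, (t - τ) ^ (-a) * τ ^ (-(1:ℝ)/2) * |Real.log (τ / Real.exp 2)| ^ (-ε)) ≤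
      (t/2) ^ ((1:ℝ)/2 - a) * (2 + 1/(1-a)) := by
  set b : ℝ := t / 2 with hbdef
  have hb0 : 0 < b := by positivity
  have hbt : b < t := by simp only [hbdef]; linarith
  set g : ℝ → ℝ := fun τ => (t - τ) ^ (-a) * τ ^ (-(1:ℝ)/2) with hgdef
  set f : ℝ → ℝ :=
    fun τ => (t - τ) ^ (-a) * τ ^ (-(1:ℝ)/2) * |Real.log (τ / Real.exp 2)| ^ (-ε) with hfdef
  -- nonnegativity
  have hgnn : ∀ τ ∈ Icc (0:ℝ) t, 0 ≤ g τ := fun τ hτ =>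
    mul_nonneg (Real.rpow_nonneg (by linarith [hτ.2]) _) (Real.rpow_nonneg hτ.1 _)
  have hfg : ∀ τ ∈ Icc (0:ℝ) t, f τ ≤ g τ := by
    intro τ hτ
    rcases eq_or_lt_of_le hτ.1 with h0 | h0
    · simp only [hfdef, hgdef, ← h0, Real.zero_rpow (by norm_num : -(1:ℝ)/2 ≠ 0), mul_zero,
        zero_mul, le_refl]
    · exact mul_le_of_le_one_right (hgnn τ hτ) (logfac_le_one h0 (by linarith [hτ.2]) hε)
  -- base functions
  have hbase1 : IntervalIntegrable (fun τ : ℝ => b ^ (-a) * τ ^ (-(1:ℝ)/2)) volume 0 b :=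
    (intervalIntegral.intervalIntegrable_rpow' (by norm_num)).const_mul _
  have hsub : IntervalIntegrable (fun τ : ℝ => (t - τ) ^ (-a)) volume b t := by
    have h := (intervalIntegral.intervalIntegrable_rpow'
      (a := 0) (b := b) (r := -a) (by linarith)).comp_sub_left t
    rw [sub_zero] at h
    have : t - b = b := by simp only [hbdef]; ring
    rw [this] at h
    exact h.symm
  have hbase2 : IntervalIntegrable (fun τ : ℝ => b ^ (-(1:ℝ)/2) * (t - τ) ^ (-a)) volume b t :=
    hsub.const_mul _
  -- integrability of g on pieces
  have hguIoc1 : Set.uIoc (0:ℝ) b = Ioc 0 b := uIoc_of_le hb0.le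
  have hguIoc2 : Set.uIoc b t = Ioc b t := uIoc_of_le hbt.le
  have hgaesm := gmeas (a := a) ht
  have hg1 : IntervalIntegrable g volume 0 b := by
    refine hbase1.mono_fun (hgaesm.mono_measure
      (Measure.restrict_mono (by rw [hguIoc1]; exact Ioc_subset_Ioc_right hbt.le) le_rfl)) ?_
    rw [hguIoc1]
    filter_upwards [ae_restrict_mem measurableSet_Ioc] with τ hτ
    have h1 : (0:ℝ) ≤ τ ^ (-(1:ℝ)/2) := Real.rpow_nonneg hτ.1.le _
    have h2 : (t - τ) ^ (-a) ≤ b ^ (-a) :=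
      Real.rpow_le_rpow_of_nonpos hb0 (by linarith [hτ.2]) (by linarith)
    rw [Real.norm_eq_abs, Real.norm_eq_abs,
      abs_of_nonneg (mul_nonneg (Real.rpow_nonneg (by linarith [hτ.2, hbt]) _) h1),
      abs_of_nonneg (mul_nonneg (Real.rpow_nonneg hb0.le _) h1)]
    exact mul_le_mul_of_nonneg_right h2 h1
  have hg2 : IntervalIntegrable g volume b t := by
    refine hbase2.mono_fun (hgaesm.mono_measure
      (Measure.restrict_mono (by rw [hguIoc2]; exact Ioc_subset_Ioc_left hb0.le) le_rfl)) ?_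
    rw [hguIoc2]
    filter_upwards [ae_restrict_mem measurableSet_Ioc] with τ hτ
    have h1 : (0:ℝ) ≤ (t - τ) ^ (-a) := Real.rpow_nonneg (by linarith [hτ.2]) _
    have h2 : τ ^ (-(1:ℝ)/2) ≤ b ^ (-(1:ℝ)/2) :=
      Real.rpow_le_rpow_of_nonpos hb0 hτ.1.le (by norm_num)
    rw [Real.norm_eq_abs, Real.norm_eq_abs,
      abs_of_nonneg (mul_nonneg h1 (Real.rpow_nonneg (le_trans hb0.le hτ.1.le) _)),
      abs_of_nonneg (mul_nonneg (Real.rpow_nonneg hb0.le _) h1)]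
    calc (t - τ) ^ (-a) * τ ^ (-(1:ℝ)/2) ≤ (t - τ) ^ (-a) * b ^ (-(1:ℝ)/2) :=
          mul_le_mul_of_nonneg_left h2 h1
      _ = b ^ (-(1:ℝ)/2) * (t - τ) ^ (-a) := mul_comm _ _
  have hgint : IntervalIntegrable g volume 0 t := hg1.trans hg2
  have hfint : IntervalIntegrable f volume 0 t := by
    refine hgint.mono_fun ((aux_meas (a := a) (ε := ε) ht ht1).mono_measure
      (Measure.restrict_mono (by rw [uIoc_of_le ht.le]) le_rfl)) ?_
    rw [uIoc_of_le ht.le]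
    filter_upwards [ae_restrict_mem measurableSet_Ioc] with τ hτ
    have hτIcc : τ ∈ Icc (0:ℝ) t := ⟨hτ.1.le, hτ.2⟩
    have hfnn : 0 ≤ f τ := mul_nonneg (hgnn τ hτIcc) (Real.rpow_nonneg (abs_nonneg _) _)
    rw [Real.norm_eq_abs, Real.norm_eq_abs, abs_of_nonneg hfnn, abs_of_nonneg (hgnn τ hτIcc)]
    exact hfg τ hτIcc
  -- main estimate
  have step1 : (∫ τ in (0:ℝ)..t, f τ) ≤ ∫ τ in (0:ℝ)..t, g τ :=
    intervalIntegral.integral_mono_on ht.le hfint hgint hfg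
  have split : (∫ τ in (0:ℝ)..t, g τ) = (∫ τ in (0:ℝ)..b, g τ) + ∫ τ in b..t, g τ :=
    (intervalIntegral.integral_add_adjacent_intervals hg1 hg2).symm
  have bnd1 : (∫ τ in (0:ℝ)..b, g τ) ≤ ∫ τ in (0:ℝ)..b, b ^ (-a) * τ ^ (-(1:ℝ)/2) := by
    refine intervalIntegral.integral_mono_on hb0.le hg1 hbase1 ?_
    intro τ hτ
    have h1 : (0:ℝ) ≤ τ ^ (-(1:ℝ)/2) := Real.rpow_nonneg hτ.1 _
    have h2 : (t - τ) ^ (-a) ≤ b ^ (-a) :=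
      Real.rpow_le_rpow_of_nonpos hb0 (by linarith [hτ.2]) (by linarith)
    exact mul_le_mul_of_nonneg_right h2 h1
  have bnd2 : (∫ τ in b..t, g τ) ≤ ∫ τ in b..t, b ^ (-(1:ℝ)/2) * (t - τ) ^ (-a) := by
    refine intervalIntegral.integral_mono_on hbt.le hg2 hbase2 ?_
    intro τ hτ
    have h1 : (0:ℝ) ≤ (t - τ) ^ (-a) := Real.rpow_nonneg (by linarith [hτ.2]) _
    have h2 : τ ^ (-(1:ℝ)/2) ≤ b ^ (-(1:ℝ)/2) :=
      Real.rpow_le_rpow_of_nonpos hb0 hτ.1 (by norm_num)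
    calc (t - τ) ^ (-a) * τ ^ (-(1:ℝ)/2) ≤ (t - τ) ^ (-a) * b ^ (-(1:ℝ)/2) :=
          mul_le_mul_of_nonneg_left h2 h1
      _ = b ^ (-(1:ℝ)/2) * (t - τ) ^ (-a) := mul_comm _ _
  have val1 : (∫ τ in (0:ℝ)..b, b ^ (-a) * τ ^ (-(1:ℝ)/2)) = b ^ (-a) * (2 * b ^ ((1:ℝ)/2)) := by
    rw [intervalIntegral.integral_const_mul, integral_rpow (Or.inl (by norm_num))]
    rw [Real.zero_rpow (by norm_num : -(1:ℝ)/2 + 1 ≠ 0)]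
    have h1 : -(1:ℝ)/2 + 1 = 1/2 := by norm_num
    rw [h1, sub_zero, show b ^ ((1:ℝ)/2) / (1/2) = 2 * b ^ ((1:ℝ)/2) from by ring]
  have val2 : (∫ τ in b..t, b ^ (-(1:ℝ)/2) * (t - τ) ^ (-a))
      = b ^ (-(1:ℝ)/2) * (b ^ (1 - a) / (1 - a)) := by
    rw [intervalIntegral.integral_const_mul]
    have := intervalIntegral.integral_comp_sub_left (a := b) (b := t)
      (fun x : ℝ => x ^ (-a)) t
    rw [sub_self] at this
    have htb : t - b = b := by simp only [hbdef]; ring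
    rw [htb] at this
    rw [this, integral_rpow (Or.inl (by linarith : (-1:ℝ) < -a))]
    have h1 : (0:ℝ) < -a + 1 := by linarith
    rw [Real.zero_rpow h1.ne']
    have h2 : -a + 1 = 1 - a := by ring
    rw [h2, sub_zero]
  have e1 : b ^ (-a) * b ^ ((1:ℝ)/2) = b ^ ((1:ℝ)/2 - a) := by
    rw [← Real.rpow_add hb0]; ring_nf
  have e2 : b ^ (-(1:ℝ)/2) * b ^ (1 - a) = b ^ ((1:ℝ)/2 - a) := by
    rw [← Real.rpow_add hb0]; ring_nf
  calc (∫ τ in (0:ℝ)..t, f τ) ≤ ∫ τ in (0:ℝ)..t, g τ := step1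
    _ = (∫ τ in (0:ℝ)..b, g τ) + ∫ τ in b..t, g τ := split
    _ ≤ b ^ (-a) * (2 * b ^ ((1:ℝ)/2)) + b ^ (-(1:ℝ)/2) * (b ^ (1 - a) / (1 - a)) :=
        add_le_add (bnd1.trans_eq val1) (bnd2.trans_eq val2)
    _ = 2 * (b ^ (-a) * b ^ ((1:ℝ)/2)) + (b ^ (-(1:ℝ)/2) * b ^ (1 - a)) * (1/(1-a)) := by
        ring
    _ = b ^ ((1:ℝ)/2 - a) * (2 + 1/(1-a)) := by rw [e1, e2]; ring

/-- Beta-function type singular integral estimate with logarithmic weights used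
to bound the buoyancy term: for `n ≥ 2`, `p ∈ (n/2, ∞)`, `ν(p) = (2p-n)/(2p)`,
`ε > 0` and `0 < ν < ν(p)`, there is `C` with, for all `0 < t ≤ 1`,
`t^{1/2}|ln(t/e²)| ∫₀^t (t-τ)^{-n/(2p)} τ^{-1/2} |ln(τ/e²)|^{-ε} dτ ≤ C t^ν`. -/
theorem stmt9 (n : ℕ) (hn : 2 ≤ n) (p : ℝ) (hp : (n : ℝ) / 2 < p)
    (ε ν : ℝ) (hε : 0 < ε) (hν : 0 < ν) (hνp : ν < (2 * p - n) / (2 * p)) :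
    ∃ C : ℝ, 0 < C ∧ ∀ t : ℝ, 0 < t → t ≤ 1 →
      t ^ ((1 : ℝ) / 2) * |Real.log (t / Real.exp 2)| *
        (∫ τ in (0 : ℝ)..t,
          (t - τ) ^ (-(n : ℝ) / (2 * p)) * τ ^ (-(1 : ℝ) / 2) *
            |Real.log (τ / Real.exp 2)| ^ (-ε)) ≤ C * t ^ ν := by
  have hn2 : (2:ℝ) ≤ (n:ℝ) := by exact_mod_cast hn
  have hp0 : 0 < p := by linarith
  have h2p : (0:ℝ) < 2 * p := by linarith
  set a : ℝ := (n:ℝ) / (2 * p) with hadef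
  have ha0 : 0 < a := by positivity
  have ha1 : a < 1 := (div_lt_one h2p).mpr (by linarith)
  have hνa : ν < 1 - a := by
    have h : (2 * p - (n:ℝ)) / (2 * p) = 1 - a := by
      rw [hadef]; field_simp
    rw [h] at hνp; exact hνp
  set δ : ℝ := 1 - a - ν with hδdef
  have hδ : 0 < δ := by simp only [hδdef]; linarith
  set M : ℝ := 2 + 1 / (1 - a) with hMdef
  have hM : 0 < M := add_pos two_pos (one_div_pos.mpr (by linarith))
  set c2 : ℝ := (2:ℝ) ^ ((1:ℝ)/2 - a) with hc2def
  have hc2 : 0 < c2 := Real.rpow_pos_of_pos two_pos _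
  refine ⟨M / c2 * (2 + 1/δ), mul_pos (div_pos hM hc2)
    (add_pos two_pos (one_div_pos.mpr hδ)), ?_⟩
  intro t ht ht1
  have hexp : -(n:ℝ) / (2 * p) = -a := by rw [hadef, neg_div]
  rw [hexp]
  have hI := core_bound ha0 ha1 hε ht ht1
  have hlogt : |Real.log (t / Real.exp 2)| = 2 - Real.log t := logfac t ht ht1
  have hlognn : 0 ≤ 2 - Real.log t := by linarith [Real.log_nonpos ht.le ht1]
  have hpre : 0 ≤ t ^ ((1:ℝ)/2) * (2 - Real.log t) :=
    mul_nonneg (Real.rpow_nonneg ht.le _) hlognn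
  rw [hlogt]
  -- key log bound
  have hkey : t ^ δ * (2 - Real.log t) ≤ 2 + 1/δ := by
    have h1 : t ^ δ ≤ 1 := Real.rpow_le_one ht.le ht1 hδ.le
    have h2 : 0 < t ^ δ := Real.rpow_pos_of_pos ht δ
    have h3 : Real.log (t ^ (-δ)) ≤ t ^ (-δ) :=
      le_trans (Real.log_le_sub_one_of_pos (Real.rpow_pos_of_pos ht _)) (by linarith)
    rw [Real.log_rpow ht] at h3
    have h4 : t ^ δ * t ^ (-δ) = 1 := by
      rw [← Real.rpow_add ht]; simp
    have h5 := mul_le_mul_of_nonneg_left h3 h2.le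
    rw [h4] at h5
    have h6 : t ^ δ * (-Real.log t) ≤ 1/δ := by
      have h7 : t ^ δ * (-Real.log t) * δ ≤ 1 := by nlinarith [h5]
      calc t ^ δ * (-Real.log t) = (t ^ δ * (-Real.log t) * δ) / δ := by field_simp
        _ ≤ 1/δ := (div_le_div_iff_of_pos_right hδ).mpr h7
    nlinarith [h6, h1, h2]
  calc t ^ ((1:ℝ)/2) * (2 - Real.log t) *
        (∫ τ in (0:ℝ)..t, (t - τ) ^ (-a) * τ ^ (-(1:ℝ)/2) * |Real.log (τ / Real.exp 2)| ^ (-ε))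
      ≤ t ^ ((1:ℝ)/2) * (2 - Real.log t) * ((t/2) ^ ((1:ℝ)/2 - a) * M) :=
        mul_le_mul_of_nonneg_left hI hpre
    _ = (M / c2) * (t ^ ((1:ℝ)/2) * t ^ ((1:ℝ)/2 - a)) * (2 - Real.log t) := by
        rw [Real.div_rpow ht.le (by norm_num : (0:ℝ) ≤ 2)]
        rw [hc2def]
        ring
    _ = (M / c2) * (t ^ ν * (t ^ δ * (2 - Real.log t))) := by
        rw [← Real.rpow_add ht, show (1:ℝ)/2 + ((1:ℝ)/2 - a) = ν + δ from by
          simp only [hδdef]; ring, Real.rpow_add ht]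
        ring
    _ ≤ (M / c2) * (t ^ ν * (2 + 1/δ)) := by
        refine mul_le_mul_of_nonneg_left
          (mul_le_mul_of_nonneg_left hkey (Real.rpow_nonneg ht.le _))
          (le_of_lt (div_pos hM hc2))
    _ = M / c2 * (2 + 1/δ) * t ^ ν := by ring
end

section
/- Let X × Y be a product of Banach spaces. Let B₁ : X × X → X, B₂ : X × Y → Y be bilinear and L : Y → X linear, with ‖B₁(x₁,x₂)‖_X ≤ λ‖x₁‖_X‖x₂‖_X, ‖B₂(x,y)‖_Y ≤ λ‖x‖_X‖y‖_Y, and ‖L(y)‖_X ≤ η‖y‖_Y for λ, η > 0. Set c★ = max{2η, 1}. If (x₀, y₀) ∈ X × Y satisfies ‖x₀‖_X + c★‖y₀‖_Y < 1/(16λ), then the system (x, y) = (x₀, y₀) + (B₁(x,x), B₂(x,y)) + (L(y), 0) has a solution (x,y) with ‖x‖_X + c★‖y‖_Y ≤ 4(‖x₀‖_X + c★‖y₀‖_Y), and this solution is unique among those with ‖x‖_X + c★‖y‖_Y < 1/(4λ). -/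
set_option maxHeartbeats 800000 in
/-- Abstract fixed-point lemma for a coupled bilinear system (Cannone):
if `B₁ : X × X → X`, `B₂ : X × Y → Y` are bilinear, `L : Y → X` is linear,
with `‖B₁(x₁,x₂)‖ ≤ λ‖x₁‖‖x₂‖`, `‖B₂(x,y)‖ ≤ λ‖x‖‖y‖`, `‖L y‖ ≤ η‖y‖`,
and `c★ = max{2η,1}`, then for data with `‖x₀‖ + c★‖y₀‖ < 1/(16λ)` the system
`(x,y) = (x₀,y₀) + (B₁(x,x), B₂(x,y)) + (L y, 0)` has a solution with
`‖x‖ + c★‖y‖ ≤ 4(‖x₀‖ + c★‖y₀‖)`, unique among solutions with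
`‖x‖ + c★‖y‖ < 1/(4λ)`. -/
theorem stmt10 {X Y : Type*} [NormedAddCommGroup X] [NormedSpace ℝ X]
    [CompleteSpace X] [NormedAddCommGroup Y] [NormedSpace ℝ Y] [CompleteSpace Y]
    (B₁ : X →L[ℝ] X →L[ℝ] X) (B₂ : X →L[ℝ] Y →L[ℝ] Y) (L : Y →L[ℝ] X)
    (lam η : ℝ) (hlam : 0 < lam) (hη : 0 < η)
    (hB₁ : ∀ x₁ x₂ : X, ‖B₁ x₁ x₂‖ ≤ lam * ‖x₁‖ * ‖x₂‖)
    (hB₂ : ∀ (x : X) (y : Y), ‖B₂ x y‖ ≤ lam * ‖x‖ * ‖y‖)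
    (hL : ∀ y : Y, ‖L y‖ ≤ η * ‖y‖)
    (x₀ : X) (y₀ : Y)
    (hdata : ‖x₀‖ + max (2 * η) 1 * ‖y₀‖ < 1 / (16 * lam)) :
    ∃ x : X, ∃ y : Y,
      x = x₀ + B₁ x x + L y ∧ y = y₀ + B₂ x y ∧
      ‖x‖ + max (2 * η) 1 * ‖y‖ ≤ 4 * (‖x₀‖ + max (2 * η) 1 * ‖y₀‖) ∧
      ∀ x' : X, ∀ y' : Y,
        x' = x₀ + B₁ x' x' + L y' → y' = y₀ + B₂ x' y' →
        ‖x'‖ + max (2 * η) 1 * ‖y'‖ < 1 / (4 * lam) →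
        x' = x ∧ y' = y := by
  set c : ℝ := max (2 * η) 1 with hc
  have hc1 : (1:ℝ) ≤ c := le_max_right _ _
  have hcη : 2 * η ≤ c := le_max_left _ _
  have hc0 : (0:ℝ) < c := lt_of_lt_of_le one_pos hc1
  set ε : ℝ := ‖x₀‖ + c * ‖y₀‖ with hεdef
  have hε0 : 0 ≤ ε := by positivity
  -- lam * ε < 1/16
  have h16 : lam * ε < 1/16 := by
    have h := (lt_div_iff₀ (by positivity : (0:ℝ) < 16 * lam)).mp hdata
    nlinarith
  set R : ℝ := 4 * ε with hRdef
  have hR0 : 0 ≤ R := by positivity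
  have hlamR : lam * R < 1/4 := by rw [hRdef]; nlinarith
  have hRlt : R < 1 / (4 * lam) := by
    rw [lt_div_iff₀ (by positivity : (0:ℝ) < 4 * lam)]; nlinarith
  set N : X × Y → ℝ := fun p => ‖p.1‖ + c * ‖p.2‖ with hNdef
  have hN0 : ∀ p, 0 ≤ N p := fun p => by positivity
  set f : X × Y → X × Y := fun p => (x₀ + B₁ p.1 p.1 + L p.2, y₀ + B₂ p.1 p.2)
    with hfdef
  -- Lipschitz estimate
  have hf_lip : ∀ p q : X × Y, N p < 1 / (4 * lam) → N q < 1 / (4 * lam) →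
      N (f p - f q) ≤ (3/4) * N (p - q) := by
    intro p q hp hq
    have hlp : lam * N p < 1/4 := by
      have := (mul_lt_mul_of_pos_left hp hlam)
      calc lam * N p < lam * (1 / (4 * lam)) := this
        _ = 1/4 := by field_simp
    have hlq : lam * N q < 1/4 := by
      have := (mul_lt_mul_of_pos_left hq hlam)
      calc lam * N q < lam * (1 / (4 * lam)) := this
        _ = 1/4 := by field_simp
    have e1 : (f p - f q).1 = B₁ p.1 (p.1 - q.1) + B₁ (p.1 - q.1) q.1
        + L (p.2 - q.2) := by
      simp only [hfdef, Prod.fst_sub, map_sub, ContinuousLinearMap.sub_apply]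
      abel
    have e2 : (f p - f q).2 = B₂ p.1 (p.2 - q.2) + B₂ (p.1 - q.1) q.2 := by
      simp only [hfdef, Prod.snd_sub, map_sub, ContinuousLinearMap.sub_apply]
      abel
    have h1 : ‖(f p - f q).1‖ ≤ lam * ‖p.1‖ * ‖p.1 - q.1‖
        + lam * ‖p.1 - q.1‖ * ‖q.1‖ + η * ‖p.2 - q.2‖ := by
      rw [e1]
      calc ‖B₁ p.1 (p.1 - q.1) + B₁ (p.1 - q.1) q.1 + L (p.2 - q.2)‖
          ≤ ‖B₁ p.1 (p.1 - q.1)‖ + ‖B₁ (p.1 - q.1) q.1‖ + ‖L (p.2 - q.2)‖ :=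
            norm_add₃_le
        _ ≤ _ := by
            gcongr <;> [exact hB₁ _ _; exact hB₁ _ _; exact hL _]
    have h2 : ‖(f p - f q).2‖ ≤ lam * ‖p.1‖ * ‖p.2 - q.2‖
        + lam * ‖p.1 - q.1‖ * ‖q.2‖ := by
      rw [e2]
      calc ‖B₂ p.1 (p.2 - q.2) + B₂ (p.1 - q.1) q.2‖
          ≤ ‖B₂ p.1 (p.2 - q.2)‖ + ‖B₂ (p.1 - q.1) q.2‖ := norm_add_le _ _
        _ ≤ _ := by gcongr <;> [exact hB₂ _ _; exact hB₂ _ _]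
    simp only [hNdef, Prod.fst_sub, Prod.snd_sub] at *
    set A := ‖p.1‖; set B := ‖p.2‖; set A' := ‖q.1‖; set B' := ‖q.2‖
    set dx := ‖p.1 - q.1‖; set dy := ‖p.2 - q.2‖
    have hA : 0 ≤ A := norm_nonneg _
    have hB : 0 ≤ B := norm_nonneg _
    have hA' : 0 ≤ A' := norm_nonneg _
    have hB' : 0 ≤ B' := norm_nonneg _
    have hdx : 0 ≤ dx := norm_nonneg _
    have hdy : 0 ≤ dy := norm_nonneg _
    have t1 : lam * A < 1/4 := by
      nlinarith [mul_nonneg (mul_nonneg hlam.le hc0.le) hB]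
    have t2 : lam * A' + lam * c * B' < 1/4 := by nlinarith
    have k1 : (lam * A + lam * A' + lam * c * B') * dx ≤ (1/2) * dx :=
      mul_le_mul_of_nonneg_right (by linarith) hdx
    have k2 : (η + c * (lam * A)) * dy ≤ (3/4 * c) * dy := by
      apply mul_le_mul_of_nonneg_right _ hdy
      nlinarith [mul_lt_mul_of_pos_left t1 hc0]
    have h2' : c * ‖(f p - f q).2‖ ≤ c * (lam * A * dy + lam * dx * B') :=
      mul_le_mul_of_nonneg_left h2 hc0.le
    nlinarith [k1, k2, h1, h2']
  -- invariance
  have hf_inv : ∀ p : X × Y, N p ≤ R → N (f p) ≤ R := by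
    intro p hp
    show ‖x₀ + B₁ p.1 p.1 + L p.2‖ + c * ‖y₀ + B₂ p.1 p.2‖ ≤ R
    have h1 : ‖x₀ + B₁ p.1 p.1 + L p.2‖ ≤ ‖x₀‖ + lam * ‖p.1‖ * ‖p.1‖ + η * ‖p.2‖ := by
      calc ‖x₀ + B₁ p.1 p.1 + L p.2‖ ≤ ‖x₀‖ + ‖B₁ p.1 p.1‖ + ‖L p.2‖ :=
            norm_add₃_le
        _ ≤ _ := by gcongr <;> [exact hB₁ _ _; exact hL _]
    have h2 : ‖y₀ + B₂ p.1 p.2‖ ≤ ‖y₀‖ + lam * ‖p.1‖ * ‖p.2‖ := by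
      calc ‖y₀ + B₂ p.1 p.2‖ ≤ ‖y₀‖ + ‖B₂ p.1 p.2‖ := norm_add_le _ _
        _ ≤ _ := by gcongr; exact hB₂ _ _
    simp only [hNdef] at *
    set A := ‖p.1‖; set B := ‖p.2‖
    have hA : 0 ≤ A := norm_nonneg _
    have hB : 0 ≤ B := norm_nonneg _
    have t1 : lam * A ≤ 1/4 := by
      nlinarith [mul_nonneg (mul_nonneg hlam.le hc0.le) hB]
    have k1 : lam * A * (A + c * B) ≤ (1/4) * R := by
      have := mul_le_mul t1 hp (by positivity) (by norm_num : (0:ℝ) ≤ 1/4)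
      linarith
    have k2 : η * B ≤ (1/2) * R := by
      nlinarith [mul_nonneg (by linarith : (0:ℝ) ≤ c - 2*η) hB]
    have h2' : c * ‖y₀ + B₂ p.1 p.2‖ ≤ c * (‖y₀‖ + lam * A * B) :=
      mul_le_mul_of_nonneg_left h2 hc0.le
    have hRe : R = 4 * (‖x₀‖ + c * ‖y₀‖) := rfl
    nlinarith [k1, k2, h1, h2', hRe]
  -- the iteration sequence
  set u : ℕ → X × Y := fun n => f^[n] (x₀, y₀) with hudef
  have hu_succ : ∀ n, u (n+1) = f (u n) := fun n => Function.iterate_succ_apply' f n _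
  have hNu : ∀ n, N (u n) ≤ R := by
    intro n
    induction n with
    | zero => simp only [hudef, Function.iterate_zero, id_eq]; simp only [hNdef]; linarith
    | succ n ih => rw [hu_succ]; exact hf_inv _ ih
  set D : ℝ := N (u 1 - u 0) with hDdef
  have hD0 : 0 ≤ D := hN0 _
  have hdiff : ∀ n, N (u (n+1) - u n) ≤ (3/4)^n * D := by
    intro n
    induction n with
    | zero => simp [hDdef]
    | succ n ih =>
      have key := hf_lip (u (n+1)) (u n) (lt_of_le_of_lt (hNu _) hRlt)
        (lt_of_le_of_lt (hNu _) hRlt)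
      rw [← hu_succ n, ← hu_succ (n+1)] at key
      calc N (u (n+1+1) - u (n+1)) ≤ (3/4) * N (u (n+1) - u n) := key
        _ ≤ (3/4) * ((3/4)^n * D) := by linarith
        _ = (3/4)^(n+1) * D := by ring
  have hcauchy : CauchySeq u := by
    apply cauchySeq_of_le_geometric (3/4) D (by norm_num)
    intro n
    have hb := hdiff n
    have hd : dist (u n) (u (n+1)) ≤ N (u (n+1) - u n) := by
      rw [dist_comm, Prod.dist_eq]
      simp only [dist_eq_norm, hNdef]
      apply max_le
      · have : (u (n+1)).1 - (u n).1 = (u (n+1) - u n).1 := rfl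
        rw [this]
        nlinarith [norm_nonneg (u (n+1) - u n).2, norm_nonneg (u (n+1) - u n).1]
      · have : (u (n+1)).2 - (u n).2 = (u (n+1) - u n).2 := rfl
        rw [this]
        nlinarith [norm_nonneg (u (n+1) - u n).2, norm_nonneg (u (n+1) - u n).1]
    calc dist (u n) (u (n+1)) ≤ (3/4)^n * D := le_trans hd hb
      _ = D * (3/4)^n := by ring
  obtain ⟨q, hq⟩ := cauchySeq_tendsto_of_complete hcauchy
  have hfcont : Continuous f := by
    apply Continuous.prodMk
    · exact continuous_const.add ((B₁.continuous₂.comp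
        (continuous_fst.prodMk continuous_fst))) |>.add (L.continuous.comp continuous_snd)
    · exact continuous_const.add (B₂.continuous₂.comp
        (continuous_fst.prodMk continuous_snd))
  have hNcont : Continuous N := by
    simp only [hNdef]
    exact (continuous_fst.norm).add (continuous_const.mul continuous_snd.norm)
  have hfix : f q = q := by
    have h1 : Filter.Tendsto (fun n => f (u n)) Filter.atTop (nhds (f q)) :=
      (hfcont.tendsto q).comp hq
    have h2 : Filter.Tendsto (fun n => u (n+1)) Filter.atTop (nhds q) :=
      hq.comp (Filter.tendsto_add_atTop_nat 1)
    have h3 : (fun n => f (u n)) = fun n => u (n+1) := by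
      funext n; rw [hu_succ]
    rw [h3] at h1
    exact tendsto_nhds_unique h1 h2
  have hNq : N q ≤ R := by
    have h1 : Filter.Tendsto (fun n => N (u n)) Filter.atTop (nhds (N q)) :=
      (hNcont.tendsto q).comp hq
    exact le_of_tendsto h1 (Filter.Eventually.of_forall hNu)
  refine ⟨q.1, q.2, ?_, ?_, ?_, ?_⟩
  · have := congrArg Prod.fst hfix
    simpa only [hfdef] using this.symm
  · have := congrArg Prod.snd hfix
    simpa only [hfdef] using this.symm
  · simpa only [hNdef, hRdef, hεdef] using hNq
  · intro x' y' he1 he2 hsmall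
    have hfix' : f (x', y') = (x', y') := by
      simp only [hfdef]
      exact Prod.ext he1.symm he2.symm
    have hNp : N (x', y') < 1 / (4 * lam) := hsmall
    have hNq' : N q < 1 / (4 * lam) := lt_of_le_of_lt hNq hRlt
    have key := hf_lip (x', y') q hNp hNq'
    rw [hfix', hfix] at key
    have hre : N ((x', y') - q) = ‖x' - q.1‖ + c * ‖y' - q.2‖ := rfl
    rw [hre] at key
    have h0 := hN0 ((x', y') - q)
    rw [hre] at h0
    have h1 : 0 ≤ ‖x' - q.1‖ := norm_nonneg _
    have h2 : 0 ≤ ‖y' - q.2‖ := norm_nonneg _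
    have hcy : ‖y' - q.2‖ ≤ c * ‖y' - q.2‖ := le_mul_of_one_le_left h2 hc1
    have hcy0 : (0:ℝ) ≤ c * ‖y' - q.2‖ := mul_nonneg hc0.le h2
    have hx1 : ‖x' - q.1‖ = 0 := by linarith
    have hy1 : ‖y' - q.2‖ = 0 := by linarith
    exact ⟨sub_eq_zero.mp (norm_eq_zero.mp hx1), sub_eq_zero.mp (norm_eq_zero.mp hy1)⟩
end
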